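/- Let G be connected and non-bipartite and let ε > 0. There exist c ∈ (0,1) and T ∈ ℕ such that for every sequence {D^(t)P^(t)}_{t≥0} with D^(t) ∈ 𝒟 and P^(t) ∈ 𝒫_{G,ε} for all t, and for all 0 ≤ t₀ ≤ t₁: ‖Q̂_{t₀,t₁+T}‖_∞ ≤ (1 − c·δ_{t₁})·‖Q̂_{t₀,t₁}‖_∞, where Q̂_{t₀,s} := P^(s)D^(s−1)P^(s−1)⋯D^(t₀)P^(t₀) for s > t₀ (with Q̂_{t₀,t₀} := P^(t₀)) and δ_t := ‖D^(t) − I_N‖_∞. -/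

import Mathlib

open Matrix Filter

noncomputable section

/-- Frobenius norm of a real matrix. -/
def frobNorm {N d : ℕ} (X : Matrix (Fin N) (Fin d) ℝ) : ℝ :=
  Real.sqrt (∑ i, ∑ j, (X i j) ^ 2)

/-- μ(X) = ‖X − 1γ_X‖_F where γ_X = (1/N)1ᵀX. -/
def gnnMu {N d : ℕ} (X : Matrix (Fin N) (Fin d) ℝ) : ℝ :=
  frobNorm (X - Matrix.of fun _i j => (∑ k, X k j) / N)

/-- Row-stochastic matrix. -/
def rowStochastic {N : ℕ} (P : Matrix (Fin N) (Fin N) ℝ) : Prop :=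
  (∀ i j, 0 ≤ P i j) ∧ ∀ i, ∑ j, P i j = 1

/-- The set 𝒫_{G,ε}. -/
def Pset {N : ℕ} (G : SimpleGraph (Fin N)) (ε : ℝ) : Set (Matrix (Fin N) (Fin N) ℝ) :=
  {P | rowStochastic P ∧ (∀ i j, G.Adj i j → ε ≤ P i j ∧ P i j ≤ 1) ∧
    ∀ i j, ¬ G.Adj i j → P i j = 0}

/-- The set 𝒟 of diagonal matrices with diagonal entries in [0,1]. -/
def Dset (N : ℕ) : Set (Matrix (Fin N) (Fin N) ℝ) :=
  {D | D.IsDiag ∧ ∀ i, 0 ≤ D i i ∧ D i i ≤ 1}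

/-- The set 𝒟_δ of diagonal matrices with diagonal entries in [0,δ]. -/
def DsetB (N : ℕ) (δ : ℝ) : Set (Matrix (Fin N) (Fin N) ℝ) :=
  {D | D.IsDiag ∧ ∀ i, 0 ≤ D i i ∧ D i i ≤ δ}

/-- The set ℳ_{G,ε} = {DP : D ∈ 𝒟, P ∈ 𝒫_{G,ε}}. -/
def Mset {N : ℕ} (G : SimpleGraph (Fin N)) (ε : ℝ) : Set (Matrix (Fin N) (Fin N) ℝ) :=
  {M | ∃ D ∈ Dset N, ∃ P ∈ Pset G ε, M = D * P}

/-- The set ℳ_{G,ε,δ} = {DP : D ∈ 𝒟_δ, P ∈ 𝒫_{G,ε}}. -/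
def MsetB {N : ℕ} (G : SimpleGraph (Fin N)) (ε δ : ℝ) : Set (Matrix (Fin N) (Fin N) ℝ) :=
  {M | ∃ D ∈ DsetB N δ, ∃ P ∈ Pset G ε, M = D * P}

/-- Backward product P^(t) P^(t-1) ⋯ P^(0). -/
def bprod {N : ℕ} (P : ℕ → Matrix (Fin N) (Fin N) ℝ) : ℕ → Matrix (Fin N) (Fin N) ℝ
  | 0 => P 0
  | t + 1 => P (t + 1) * bprod P t

/-- The orthogonal projection J = I − (1/N)11ᵀ onto the complement of span{1}. -/
def projJ (N : ℕ) : Matrix (Fin N) (Fin N) ℝ :=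
  1 - (N : ℝ)⁻¹ • Matrix.of fun _ _ => (1 : ℝ)

/-- Matrix ∞-norm: maximum absolute row sum. -/
def infNorm {N : ℕ} (M : Matrix (Fin N) (Fin N) ℝ) : ℝ :=
  ⨆ i, ∑ j, |M i j|

/-- Forward product of entrywise absolute values |W^(0)||W^(1)|⋯|W^(k)|. -/
def Wabs {d : ℕ} (W : ℕ → Matrix (Fin d) (Fin d) ℝ) : ℕ → Matrix (Fin d) (Fin d) ℝ
  | 0 => (W 0).map (fun x => |x|)
  | k + 1 => Wabs W k * (W (k + 1)).map (fun x => |x|)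

/-- Q̂_{t₀, t₀+k} = P^{t₀+k} D^{t₀+k-1} P^{t₀+k-1} ⋯ D^{t₀} P^{t₀}. -/
def Qhat {N : ℕ} (D P : ℕ → Matrix (Fin N) (Fin N) ℝ) (t₀ : ℕ) :
    ℕ → Matrix (Fin N) (Fin N) ℝ
  | 0 => P t₀
  | k + 1 => P (t₀ + k + 1) * D (t₀ + k) * Qhat D P t₀ k

/-- Q_{0,k} = D^(k) P^(k) ⋯ D^(0) P^(0). -/
def Qprod {N : ℕ} (D P : ℕ → Matrix (Fin N) (Fin N) ℝ) : ℕ → Matrix (Fin N) (Fin N) ℝ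
  | 0 => D 0 * P 0
  | k + 1 => D (k + 1) * P (k + 1) * Qprod D P k

/-- P^(m+k) P^(m+k-1) ⋯ P^(m). -/
def PprodFrom {N : ℕ} (P : ℕ → Matrix (Fin N) (Fin N) ℝ) (m : ℕ) :
    ℕ → Matrix (Fin N) (Fin N) ℝ
  | 0 => P m
  | k + 1 => P (m + k + 1) * PprodFrom P m k

/-- D^(m+k) P^(m+k) ⋯ D^(m) P^(m). -/
def QprodFrom {N : ℕ} (D P : ℕ → Matrix (Fin N) (Fin N) ℝ) (m : ℕ) :
    ℕ → Matrix (Fin N) (Fin N) ℝ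
  | 0 => D m * P m
  | k + 1 => D (m + k + 1) * P (m + k + 1) * QprodFrom D P m k

/-- Joint spectral radius of a set of square matrices (w.r.t. the Frobenius norm;
the value is independent of the chosen norm). -/
def JSR {n : ℕ} (A : Set (Matrix (Fin n) (Fin n) ℝ)) : ℝ :=
  Filter.limsup (fun k : ℕ =>
    sSup {x : ℝ | ∃ M : Fin k → Matrix (Fin n) (Fin n) ℝ,
      (∀ i, M i ∈ A) ∧ x = frobNorm (List.ofFn M).prod ^ (k : ℝ)⁻¹}) Filter.atTop

/-- Spectral radius of a real square matrix: max modulus of its complex eigenvalues. -/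
def specRad {n : ℕ} (M : Matrix (Fin n) (Fin n) ℝ) : ℝ :=
  sSup {r : ℝ | ∃ z ∈ spectrum ℂ (M.map Complex.ofReal), r = ‖z‖}

end

section GraphAux

variable {N : ℕ} {G : SimpleGraph (Fin N)}

lemma exists_neighbor (hN : 2 ≤ N) (hconn : G.Connected) (j : Fin N) :
    ∃ u, G.Adj j u := by
  have : Nontrivial (Fin N) := Fin.nontrivial_iff_two_le.mpr hN
  obtain ⟨k, hk⟩ := exists_ne j
  obtain ⟨w⟩ := hconn.preconnected j k
  cases w with
  | nil => exact absurd rfl hk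
  | cons h _ => exact ⟨_, h⟩

lemma pad_walk (hN : 2 ≤ N) (hconn : G.Connected) {i j : Fin N}
    (w : G.Walk i j) (n : ℕ) : ∃ w' : G.Walk i j, w'.length = w.length + 2 * n := by
  induction n with
  | zero => exact ⟨w, by omega⟩
  | succ n ih =>
    obtain ⟨w', hw'⟩ := ih
    obtain ⟨u, hu⟩ := exists_neighbor hN hconn j
    refine ⟨w'.append (SimpleGraph.Walk.cons hu (SimpleGraph.Walk.cons hu.symm SimpleGraph.Walk.nil)), ?_⟩
    simp [SimpleGraph.Walk.length_append, hw']
    omega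

lemma odd_loop (hconn : G.Connected) (hnb : ¬ G.Colorable 2) (v₀ : Fin N) :
    ∃ w : G.Walk v₀ v₀, Odd w.length := by
  by_contra h
  push_neg at h
  simp only [Nat.not_odd_iff_even] at h
  apply hnb
  refine ⟨SimpleGraph.Coloring.mk
    (fun u => if Even (hconn.preconnected v₀ u).some.length then (0 : Fin 2) else 1) ?_⟩
  intro u w hadj hc
  set pu := (hconn.preconnected v₀ u).some with hpu
  set pw := (hconn.preconnected v₀ w).some with hpw
  have hW := h (pu.append (SimpleGraph.Walk.cons hadj pw.reverse))
  rw [SimpleGraph.Walk.length_append, SimpleGraph.Walk.length_cons,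
    SimpleGraph.Walk.length_reverse, Nat.even_iff] at hW
  by_cases h1 : Even pu.length <;> by_cases h2 : Even pw.length
  · rw [Nat.even_iff] at h1 h2; omega
  · simp [h1, h2] at hc
  · simp [h1, h2] at hc
  · rw [Nat.not_even_iff] at h1 h2; omega

lemma exists_T (hN : 2 ≤ N) (hconn : G.Connected) (hnb : ¬ G.Colorable 2) :
    ∃ T, 1 ≤ T ∧ ∀ i j : Fin N, ∃ w : G.Walk i j, w.length = T := by
  have hne : Nonempty (Fin N) := ⟨⟨0, by omega⟩⟩
  obtain ⟨v₀⟩ := hne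
  obtain ⟨c, hodd⟩ := odd_loop hconn hnb v₀
  set p : (i : Fin N) → G.Walk i v₀ := fun i => (hconn.preconnected i v₀).some with hp
  set q : (j : Fin N) → G.Walk v₀ j := fun j => (hconn.preconnected v₀ j).some with hq
  set B := Finset.univ.sup (fun ij : Fin N × Fin N => (p ij.1).length + (q ij.2).length) with hB
  obtain ⟨b, hb⟩ := hodd
  refine ⟨B + c.length, by omega, ?_⟩
  intro i j
  have hle : (p i).length + (q j).length ≤ B :=
    Finset.le_sup (f := fun ij : Fin N × Fin N => (p ij.1).length + (q ij.2).length)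
      (Finset.mem_univ (i, j))
  rcases Nat.even_or_odd (B - ((p i).length + (q j).length)) with he | ho
  · obtain ⟨m, hm⟩ := he
    obtain ⟨w', hw'⟩ := pad_walk hN hconn ((p i).append (c.append (q j))) m
    refine ⟨w', ?_⟩
    rw [hw']
    simp [SimpleGraph.Walk.length_append]
    omega
  · obtain ⟨a, ha⟩ := ho
    obtain ⟨w', hw'⟩ := pad_walk hN hconn ((p i).append (q j)) (a + b + 1)
    refine ⟨w', ?_⟩
    rw [hw']
    simp [SimpleGraph.Walk.length_append]
    omega

end GraphAux

section MatAux

variable {N : ℕ} {G : SimpleGraph (Fin N)} {ε : ℝ}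

/-- The partial product D^{t₁+s} P^{t₁+s} ⋯ P^{t₁+1} D^{t₁}. -/
noncomputable def myB {N : ℕ} (D P : ℕ → Matrix (Fin N) (Fin N) ℝ) (t₁ : ℕ) :
    ℕ → Matrix (Fin N) (Fin N) ℝ
  | 0 => D t₁
  | s + 1 => D (t₁ + s + 1) * P (t₁ + s + 1) * myB D P t₁ s

lemma qhat_link (D P : ℕ → Matrix (Fin N) (Fin N) ℝ) (t₀ k : ℕ) :
    ∀ s, Qhat D P t₀ (k + s + 1) =
      P (t₀ + k + s + 1) * (myB D P (t₀ + k) s * Qhat D P t₀ k) := by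
  intro s
  induction s with
  | zero => simp [Qhat, myB, mul_assoc]
  | succ s ih =>
    have h1 : k + (s + 1) + 1 = (k + s + 1) + 1 := by omega
    rw [h1]
    show P (t₀ + (k + s + 1) + 1) * D (t₀ + (k + s + 1)) * Qhat D P t₀ (k + s + 1) = _
    rw [ih]
    show _ = P (t₀ + k + (s + 1) + 1) *
      ((D (t₀ + k + s + 1) * P (t₀ + k + s + 1) * myB D P (t₀ + k) s) * Qhat D P t₀ k)
    have e1 : t₀ + (k + s + 1) + 1 = t₀ + k + (s + 1) + 1 := by omega
    have e2 : t₀ + (k + s + 1) = t₀ + k + s + 1 := by omega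
    rw [e1, e2]
    simp only [mul_assoc]

lemma diag_mul_apply {D M : Matrix (Fin N) (Fin N) ℝ} (hD : D.IsDiag) (i j : Fin N) :
    (D * M) i j = D i i * M i j := by
  rw [Matrix.mul_apply]
  refine Finset.sum_eq_single i (fun l _ hl => ?_) (fun h => absurd (Finset.mem_univ i) h)
  rw [hD (Ne.symm hl), zero_mul]

lemma rowsum_mul (M B : Matrix (Fin N) (Fin N) ℝ) (i : Fin N) :
    ∑ j, (M * B) i j = ∑ m, M i m * ∑ j, B m j := by
  simp only [Matrix.mul_apply]
  rw [Finset.sum_comm]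
  exact Finset.sum_congr rfl fun m _ => (Finset.mul_sum _ _ _).symm

lemma key_sum {Pm : Matrix (Fin N) (Fin N) ℝ} (hPm : Pm ∈ Pset G ε)
    (ρ : Fin N → ℝ) (hρ0 : ∀ m, 0 ≤ ρ m) (hρ1 : ∀ m, ρ m ≤ 1)
    {i m₀ : Fin N} (hadj : G.Adj i m₀) {b : ℝ} (hb : 0 ≤ b) (hm₀ : ρ m₀ ≤ 1 - b) :
    ∑ m, Pm i m * ρ m ≤ 1 - ε * b := by
  obtain ⟨⟨hPnn, hPrs⟩, hPe, hP0⟩ := hPm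
  have hεP : ε ≤ Pm i m₀ := (hPe i m₀ hadj).1
  calc ∑ m, Pm i m * ρ m
      ≤ ∑ m, (Pm i m - if m = m₀ then Pm i m₀ * b else 0) := by
        refine Finset.sum_le_sum fun m _ => ?_
        by_cases hm : m = m₀
        · subst hm; rw [if_pos rfl]; nlinarith [hPnn i m]
        · simp only [if_neg hm]; nlinarith [hPnn i m, hρ1 m, hρ0 m]
    _ = 1 - Pm i m₀ * b := by
        rw [Finset.sum_sub_distrib, hPrs i, Finset.sum_ite_eq' Finset.univ m₀
          (fun _ => Pm i m₀ * b)]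
        simp
    _ ≤ 1 - ε * b := by nlinarith

lemma myB_inv (hε : 0 < ε) (D P : ℕ → Matrix (Fin N) (Fin N) ℝ)
    (hD : ∀ t, D t ∈ Dset N) (hP : ∀ t, P t ∈ Pset G ε) (t₁ : ℕ) :
    ∀ s, (∀ i j, 0 ≤ myB D P t₁ s i j) ∧
      (∀ i, ∑ j, myB D P t₁ s i j ≤ 1) ∧
      (∀ (i j : Fin N) (w : G.Walk i j), w.length = s →
        ∑ l, myB D P t₁ s i l ≤ 1 - ε ^ s * (1 - D t₁ j j)) := by
  intro s
  induction s with
  | zero =>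
    obtain ⟨hDd, hDb⟩ := hD t₁
    have hrow0 : ∀ i, ∑ j, myB D P t₁ 0 i j = D t₁ i i := by
      intro i
      refine Finset.sum_eq_single i (fun l _ hl => hDd (Ne.symm hl))
        (fun h => absurd (Finset.mem_univ i) h)
    refine ⟨fun i j => ?_, fun i => ?_, fun i j w hw => ?_⟩
    · show 0 ≤ D t₁ i j
      by_cases hij : i = j
      · subst hij; exact (hDb i).1
      · rw [hDd hij]
    · rw [hrow0]; exact (hDb i).2
    · have hij : i = j := SimpleGraph.Walk.eq_of_length_eq_zero hw
      subst hij
      rw [hrow0]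
      simp
  | succ s ih =>
    obtain ⟨ihnn, ihrow1, ihwalk⟩ := ih
    obtain ⟨hDd, hDb⟩ := hD (t₁ + s + 1)
    obtain ⟨⟨hPnn, hPrs⟩, hPe, hP0⟩ := hP (t₁ + s + 1)
    have hentry : ∀ i j, myB D P t₁ (s + 1) i j =
        D (t₁ + s + 1) i i * ∑ m, P (t₁ + s + 1) i m * myB D P t₁ s m j := by
      intro i j
      show (D (t₁ + s + 1) * P (t₁ + s + 1) * myB D P t₁ s) i j = _
      rw [mul_assoc, diag_mul_apply hDd, Matrix.mul_apply]
    have hrow : ∀ i, ∑ j, myB D P t₁ (s + 1) i j =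
        D (t₁ + s + 1) i i * ∑ m, P (t₁ + s + 1) i m * ∑ j, myB D P t₁ s m j := by
      intro i
      simp only [hentry, ← Finset.mul_sum]
      congr 1
      rw [Finset.sum_comm]
      exact Finset.sum_congr rfl fun m _ => (Finset.mul_sum _ _ _).symm
    have hρ0 : ∀ m, 0 ≤ ∑ l, myB D P t₁ s m l :=
      fun m => Finset.sum_nonneg fun l _ => ihnn m l
    refine ⟨fun i j => ?_, fun i => ?_, fun i j w hw => ?_⟩
    · rw [hentry]
      exact mul_nonneg (hDb i).1
        (Finset.sum_nonneg fun m _ => mul_nonneg (hPnn i m) (ihnn m j))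
    · rw [hrow]
      have hX1 : ∑ m, P (t₁ + s + 1) i m * ∑ j, myB D P t₁ s m j ≤ 1 := by
        calc ∑ m, P (t₁ + s + 1) i m * ∑ j, myB D P t₁ s m j
            ≤ ∑ m, P (t₁ + s + 1) i m * 1 :=
              Finset.sum_le_sum fun m _ =>
                mul_le_mul_of_nonneg_left (ihrow1 m) (hPnn i m)
          _ = 1 := by simp only [mul_one]; exact hPrs i
      have hX0 : 0 ≤ ∑ m, P (t₁ + s + 1) i m * ∑ j, myB D P t₁ s m j :=
        Finset.sum_nonneg fun m _ => mul_nonneg (hPnn i m) (hρ0 m)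
      nlinarith [(hDb i).1, (hDb i).2]
    · cases w with
      | nil => simp at hw
      | @cons _ m₀ _ hadj w' =>
        have hw' : w'.length = s := by simpa using hw
        have hdj : 0 ≤ 1 - D t₁ j j := by
          obtain ⟨_, hb⟩ := hD t₁
          nlinarith [(hb j).2]
        have hb0 : 0 ≤ ε ^ s * (1 - D t₁ j j) :=
          mul_nonneg (pow_nonneg hε.le s) hdj
        have hm₀ : ∑ l, myB D P t₁ s m₀ l ≤ 1 - ε ^ s * (1 - D t₁ j j) :=
          ihwalk m₀ j w' hw'
        have hks := key_sum (hP (t₁ + s + 1))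
          (fun m => ∑ l, myB D P t₁ s m l) hρ0 ihrow1 hadj hb0 hm₀
        rw [hrow i, pow_succ]
        have hX0 : 0 ≤ ∑ m, P (t₁ + s + 1) i m * ∑ l, myB D P t₁ s m l :=
          Finset.sum_nonneg fun m _ => mul_nonneg (hPnn i m) (hρ0 m)
        nlinarith [(hDb i).1, (hDb i).2]

lemma infNorm_nonneg (hN : 0 < N) (Q : Matrix (Fin N) (Fin N) ℝ) : 0 ≤ infNorm Q := by
  have : Nonempty (Fin N) := ⟨⟨0, hN⟩⟩
  have h := le_ciSup (f := fun i => ∑ j, |Q i j|)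
    (Set.Finite.bddAbove (Set.finite_range _)) (Classical.arbitrary (Fin N))
  exact le_trans (Finset.sum_nonneg fun j _ => abs_nonneg _) h

lemma infNorm_mul_le (hN : 0 < N) (A Q : Matrix (Fin N) (Fin N) ℝ)
    (hA : ∀ i j, 0 ≤ A i j) (a : ℝ) (ha : ∀ i, ∑ j, A i j ≤ a) :
    infNorm (A * Q) ≤ a * infNorm Q := by
  have : Nonempty (Fin N) := ⟨⟨0, hN⟩⟩
  have hQnorm : ∀ m, ∑ j, |Q m j| ≤ infNorm Q := fun m =>
    le_ciSup (f := fun i => ∑ j, |Q i j|) (Set.Finite.bddAbove (Set.finite_range _)) m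
  have hQ0 : 0 ≤ infNorm Q := infNorm_nonneg hN Q
  refine ciSup_le fun i => ?_
  calc ∑ j, |(A * Q) i j|
      ≤ ∑ j, ∑ m, A i m * |Q m j| := by
        refine Finset.sum_le_sum fun j _ => ?_
        rw [Matrix.mul_apply]
        refine le_trans (Finset.abs_sum_le_sum_abs _ _) ?_
        refine Finset.sum_le_sum fun m _ => ?_
        rw [abs_mul, abs_of_nonneg (hA i m)]
    _ = ∑ m, A i m * ∑ j, |Q m j| := by
        rw [Finset.sum_comm]
        exact Finset.sum_congr rfl fun m _ => (Finset.mul_sum _ _ _).symm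
    _ ≤ ∑ m, A i m * infNorm Q :=
        Finset.sum_le_sum fun m _ => mul_le_mul_of_nonneg_left (hQnorm m) (hA i m)
    _ = (∑ m, A i m) * infNorm Q := (Finset.sum_mul _ _ _).symm
    _ ≤ a * infNorm Q := mul_le_mul_of_nonneg_right (ha i) hQ0

end MatAux

/-- long products of matrices DP contract the ∞-norm:
‖Q̂_{t₀,t₁+T}‖_∞ ≤ (1 − c δ_{t₁}) ‖Q̂_{t₀,t₁}‖_∞. -/
theorem stmt_6 (N : ℕ) (hN : 2 ≤ N) (G : SimpleGraph (Fin N))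
    (hconn : G.Connected) (hnb : ¬ G.Colorable 2) (ε : ℝ) (hε : 0 < ε) :
    ∃ c : ℝ, 0 < c ∧ c < 1 ∧ ∃ T : ℕ,
      ∀ D P : ℕ → Matrix (Fin N) (Fin N) ℝ,
        (∀ t, D t ∈ Dset N) → (∀ t, P t ∈ Pset G ε) →
        ∀ t₀ t₁ : ℕ, t₀ ≤ t₁ →
          infNorm (Qhat D P t₀ (t₁ + T - t₀)) ≤
            (1 - c * infNorm (D t₁ - 1)) * infNorm (Qhat D P t₀ (t₁ - t₀)) := by
  obtain ⟨T, hT1, hTwalk⟩ := exists_T hN hconn hnb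
  have hN0 : 0 < N := by omega
  have hne : Nonempty (Fin N) := ⟨⟨0, hN0⟩⟩
  refine ⟨min (ε ^ T) (1/2), lt_min (pow_pos hε T) (by norm_num),
    lt_of_le_of_lt (min_le_right _ _) (by norm_num), T, ?_⟩
  intro D P hD hP t₀ t₁ ht
  obtain ⟨s, rfl⟩ : ∃ s, T = s + 1 := ⟨T - 1, by omega⟩
  set k := t₁ - t₀ with hk
  have hkt : t₀ + k = t₁ := by omega
  have harg : t₁ + (s + 1) - t₀ = k + s + 1 := by omega
  rw [harg, qhat_link D P t₀ k s, ← mul_assoc]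
  obtain ⟨hDd, hDb⟩ := hD t₁
  have hδrow : ∀ i, ∑ j, |(D t₁ - 1) i j| = 1 - D t₁ i i := by
    intro i
    rw [Finset.sum_eq_single i]
    · rw [Matrix.sub_apply, Matrix.one_apply_eq,
        abs_of_nonpos (by nlinarith [(hDb i).2])]
      ring
    · intro l _ hl
      rw [Matrix.sub_apply, hDd (Ne.symm hl), Matrix.one_apply_ne (Ne.symm hl)]
      simp
    · exact fun h => absurd (Finset.mem_univ i) h
  have hδ : infNorm (D t₁ - 1) = ⨆ i, (1 - D t₁ i i) := iSup_congr hδrow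
  obtain ⟨jm, hjm⟩ := exists_eq_ciSup_of_finite (f := fun i => 1 - D t₁ i i)
  set δ := infNorm (D t₁ - 1) with hδdef
  have hδeq : δ = 1 - D t₁ jm jm := by rw [hδ, ← hjm]
  have hδ0 : 0 ≤ δ := by rw [hδeq]; nlinarith [(hDb jm).2]
  have hδeq' : δ = 1 - D (t₀ + k) jm jm := by rw [hδeq, hkt]
  obtain ⟨Bnn, Brow1, Bwalk⟩ := myB_inv hε D P hD hP (t₀ + k) s
  have hrsA : ∀ i, ∑ j, (P (t₀ + k + s + 1) * myB D P (t₀ + k) s) i j ≤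
      1 - ε ^ (s + 1) * δ := by
    intro i
    rw [rowsum_mul]
    obtain ⟨w, hwlen⟩ := hTwalk i jm
    cases w with
    | nil => simp at hwlen
    | @cons _ m₀ _ hadj w' =>
      have hw' : w'.length = s := by simpa using hwlen
      have hρ0 : ∀ m, 0 ≤ ∑ l, myB D P (t₀ + k) s m l :=
        fun m => Finset.sum_nonneg fun l _ => Bnn m l
      have hb0 : 0 ≤ ε ^ s * δ := mul_nonneg (pow_nonneg hε.le s) hδ0
      have hm₀ : ∑ l, myB D P (t₀ + k) s m₀ l ≤ 1 - ε ^ s * δ := by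
        rw [hδeq']
        exact Bwalk m₀ jm w' hw'
      have hks := key_sum (hP (t₀ + k + s + 1))
        (fun m => ∑ l, myB D P (t₀ + k) s m l) hρ0 Brow1 hadj hb0 hm₀
      refine le_trans hks (le_of_eq ?_)
      rw [pow_succ]
      ring
  have hAnn : ∀ i j, 0 ≤ (P (t₀ + k + s + 1) * myB D P (t₀ + k) s) i j := by
    intro i j
    rw [Matrix.mul_apply]
    exact Finset.sum_nonneg fun m _ => mul_nonneg ((hP _).1.1 i m) (Bnn m j)
  have hmain := infNorm_mul_le hN0 _ (Qhat D P t₀ k) hAnn _ hrsA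
  refine le_trans hmain ?_
  have hQ0 : 0 ≤ infNorm (Qhat D P t₀ k) := infNorm_nonneg hN0 _
  have hc : min (ε ^ (s + 1)) (1/2) ≤ ε ^ (s + 1) := min_le_left _ _
  refine mul_le_mul_of_nonneg_right ?_ hQ0
  nlinarith [mul_le_mul_of_nonneg_right hc hδ0]
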